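/- The only minimally avoidable formula with exactly one fragment is AA. -/

import Mathlib

/-- The finite factor of the infinite word `w` starting at position `i` of length `n`. -/
def extract {α : Type*} (w : ℕ → α) (i n : ℕ) : List α :=
  (List.range n).map (fun k => w (i + k))

/-- `u` is a (finite) factor of the infinite word `w`. -/
def IsFactorOf {α : Type*} (u : List α) (w : ℕ → α) : Prop :=
  ∃ i, u = extract w i u.length

/-- A morphism (given on variables/letters) is non-erasing. -/
def NonErasing {V α : Type*} (h : V → List α) : Prop := ∀ v, h v ≠ []

/-- The image of a pattern `p` under the morphism induced by `h`. -/
def patImage {V α : Type*} (h : V → List α) (p : List V) : List α :=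
  (p.map h).flatten

/-- `h` is an occurrence of the formula `f` (a set of fragments) in the infinite word `w`:
`h` is non-erasing and the `h`-image of every fragment of `f` is a factor of `w`. -/
def OccursIn {V α : Type*} (f : Set (List V)) (h : V → List α) (w : ℕ → α) : Prop :=
  NonErasing h ∧ ∀ p ∈ f, IsFactorOf (patImage h p) w

/-- The infinite word `w` avoids the formula `f`. -/
def Avoids {V α : Type*} (w : ℕ → α) (f : Set (List V)) : Prop :=
  ∀ h : V → List α, ¬ OccursIn f h w

/-- An infinite word is recurrent if every factor occurs infinitely often. -/
def Recurrent {α : Type*} (w : ℕ → α) : Prop :=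
  ∀ u : List α, IsFactorOf u w → ∀ N, ∃ i ≥ N, u = extract w i u.length

/-- An infinite word is square-free if it has no factor `uu` with `u` nonempty. -/
def SquareFree {α : Type*} (w : ℕ → α) : Prop :=
  ∀ u : List α, u ≠ [] → ¬ IsFactorOf (u ++ u) w

/-- The formula `f'` divides the formula `f`: some non-erasing morphism maps every
fragment of `f'` to a factor of some fragment of `f`. -/
def Divides {V' V : Type*} (f' : Set (List V')) (f : Set (List V)) : Prop :=
  ∃ h : V' → List V, NonErasing h ∧ ∀ q ∈ f', ∃ p ∈ f, patImage h q <:+: p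

/-- The avoidability index of a formula: the least alphabet size over which there is an
infinite word avoiding it. -/
noncomputable def lamIdx {V : Type*} (f : Set (List V)) : ℕ :=
  sInf {n : ℕ | ∃ w : ℕ → Fin n, Avoids w f}

/-- A formula is avoidable if some infinite word over some finite alphabet avoids it. -/
def Avoidable {V : Type*} (f : Set (List V)) : Prop :=
  ∃ (n : ℕ) (w : ℕ → Fin n), Avoids w f

/-- An infinite word is `r`-free: every factor of the form `x ++ y ++ x` with `x ≠ []`
(a repetition of period `|xy|` and exponent `|xyx|/|xy|`) has exponent `< r`. -/
def AlphaFree {α : Type*} (w : ℕ → α) (r : ℝ) : Prop :=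
  ∀ x y : List α, x ≠ [] → IsFactorOf (x ++ y ++ x) w →
    ((2 * x.length + y.length : ℝ) / (x.length + y.length)) < r

/-- An infinite word is `r⁺`-free: every such repetition has exponent `≤ r`. -/
def AlphaPlusFree {α : Type*} (w : ℕ → α) (r : ℝ) : Prop :=
  ∀ x y : List α, x ≠ [] → IsFactorOf (x ++ y ++ x) w →
    ((2 * x.length + y.length : ℝ) / (x.length + y.length)) ≤ r

/-- A finite word is `r⁺`-free. -/
def AlphaPlusFreeList {α : Type*} (u : List α) (r : ℝ) : Prop :=
  ∀ x y : List α, x ≠ [] → (x ++ y ++ x) <:+: u →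
    ((2 * x.length + y.length : ℝ) / (x.length + y.length)) ≤ r


section Basics
open List
variable {α : Type*} {V : Type*}

@[simp] lemma extract_length (w : ℕ → α) (i n : ℕ) : (extract w i n).length = n := by
  simp [_root_.extract]

@[simp] lemma extract_zero (w : ℕ → α) (i : ℕ) : extract w i 0 = [] := by simp [_root_.extract]

lemma extract_succ (w : ℕ → α) (i n : ℕ) :
    extract w i (n+1) = extract w i n ++ [w (i+n)] := by
  simp [_root_.extract, List.range_succ]

lemma extract_add (w : ℕ → α) (i m n : ℕ) :
    extract w i (m + n) = extract w i m ++ extract w (i + m) n := by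
  induction n with
  | zero => simp
  | succ n ih =>
      rw [show m + (n+1) = (m+n)+1 by omega, extract_succ, ih, extract_succ,
        List.append_assoc]
      ring_nf

lemma append_eq_extract_split {w : ℕ → α} {l₁ l₂ : List α} {i n : ℕ}
    (h : l₁ ++ l₂ = extract w i n) :
    l₁ = extract w i l₁.length ∧ l₂ = extract w (i + l₁.length) l₂.length := by
  have hn : n = l₁.length + l₂.length := by
    have := congrArg List.length h; simp at this; omega
  subst hn
  rw [extract_add] at h
  exact List.append_inj h (by simp)

lemma isFactorOf_of_infix {w : ℕ → α} {u v : List α} (hu : u <:+: v)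
    (hv : IsFactorOf v w) : IsFactorOf u w := by
  obtain ⟨s, t, hst⟩ := hu
  obtain ⟨i, hi⟩ := hv
  subst hst
  have h1 : (s ++ u) ++ t = extract w i ((s ++ u ++ t).length) := by
    rw [← hi]
  have h2 := (append_eq_extract_split h1).1
  exact ⟨i + s.length, (append_eq_extract_split h2).2⟩

end Basics

section Basics2
open List
variable {α : Type*} {V : Type*}

lemma extract_infix_prefix (w : ℕ → α) (i n : ℕ) :
    extract w i n <:+: extract w 0 (i + n) := by
  have : extract w 0 (i + n) = extract w 0 i ++ extract w (0 + i) n := extract_add w 0 i n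
  rw [this, Nat.zero_add]
  exact (List.suffix_append _ _).isInfix

lemma isFactorOf_infix_prefix {w : ℕ → α} {u : List α} (h : IsFactorOf u w) :
    ∃ M, u <:+: extract w 0 M := by
  obtain ⟨i, hi⟩ := h
  have := extract_infix_prefix w i u.length
  rw [← hi] at this
  exact ⟨_, this⟩

lemma extract_isFactorOf (w : ℕ → α) (i n : ℕ) : IsFactorOf (extract w i n) w :=
  ⟨i, by simp⟩

@[simp] lemma patImage_nil {β : Type*} (h : V → List β) : patImage h [] = [] := rfl

@[simp] lemma patImage_cons {β : Type*} (h : V → List β) (v : V) (l : List V) :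
    patImage h (v :: l) = h v ++ patImage h l := by
  simp [patImage]

lemma patImage_append {β : Type*} (h : V → List β) (l₁ l₂ : List V) :
    patImage h (l₁ ++ l₂) = patImage h l₁ ++ patImage h l₂ := by
  simp [patImage]

lemma patImage_isInfix {β : Type*} (h : V → List β) {q r : List V} (hq : q <:+: r) :
    patImage h q <:+: patImage h r := by
  obtain ⟨s, t, hst⟩ := hq
  exact ⟨patImage h s, patImage h t, by rw [← patImage_append, ← patImage_append, hst]⟩

lemma length_patImage_pos {β : Type*} {h : V → List β} (hne : NonErasing h)
    {r : List V} (hr : r ≠ []) : 0 < (patImage h r).length := by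
  obtain ⟨v, l, rfl⟩ := List.exists_cons_of_ne_nil hr
  have := hne v
  simp only [patImage_cons, List.length_append]
  have : 0 < (h v).length := List.length_pos_iff.mpr this
  omega

lemma patImage_congr {β : Type*} {h h' : V → List β} {l : List V}
    (H : ∀ v ∈ l, h v = h' v) : patImage h l = patImage h' l := by
  unfold patImage
  rw [List.map_congr_left H]

lemma avoids_mono {β : Type*} {w : ℕ → β} {f f' : Set (List V)}
    (hw : Avoids w f') (hdiv : ∀ q ∈ f', ∃ r ∈ f, q <:+: r) : Avoids w f := by
  intro h hocc
  apply hw h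
  refine ⟨hocc.1, ?_⟩
  intro q hq
  obtain ⟨r, hr, hinf⟩ := hdiv q hq
  exact isFactorOf_of_infix (patImage_isInfix h hinf) (hocc.2 r hr)

lemma unavoidable_mono {f f' : Set (List V)} (hf : ¬ Avoidable f)
    (hdiv : ∀ q ∈ f', ∃ r ∈ f, q <:+: r) : ¬ Avoidable f' := by
  rintro ⟨n, w, hw⟩; exact hf ⟨n, w, avoids_mono hw hdiv⟩

lemma not_avoidable_iff {f : Set (List V)} :
    ¬ Avoidable f ↔ ∀ (n : ℕ) (w : ℕ → Fin n), ∃ h, OccursIn f h w := by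
  unfold Avoidable Avoids
  push_neg
  rfl

end Basics2

section ListLemmas
open List
variable {V : Type*} [DecidableEq V]

lemma exists_split_of_count_one {l : List V} {x : V} (h : l.count x = 1) :
    ∃ u v, l = u ++ x :: v ∧ x ∉ u ∧ x ∉ v := by
  induction l with
  | nil => simp at h
  | cons a l ih =>
      by_cases hax : a = x
      · subst hax
        have : l.count a = 0 := by
          rw [List.count_cons_self] at h; omega
        exact ⟨[], l, rfl, by simp, by
          intro hm; rw [List.count_eq_zero] at this; exact this hm⟩
      · have hxa : x ≠ a := fun hh => hax hh.symm
        have : l.count x = 1 := by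
          rwa [List.count_cons_of_ne hax] at h
        obtain ⟨u, v, rfl, hu, hv⟩ := ih this
        refine ⟨a :: u, v, rfl, ?_, hv⟩
        intro hm
        rcases List.mem_cons.mp hm with hh | hh
        · exact hxa hh
        · exact hu hh

lemma exists_two_split {l : List V} {x : V} (h : 2 ≤ l.count x) :
    ∃ u v t, l = u ++ x :: v ++ x :: t := by
  induction l with
  | nil => simp at h
  | cons a l ih =>
      by_cases hax : a = x
      · subst hax
        have h1 : 1 ≤ l.count a := by rw [List.count_cons_self] at h; omega
        have : a ∈ l := List.count_pos_iff.mp h1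
        obtain ⟨v, t, rfl⟩ := List.append_of_mem this
        exact ⟨[], v, t, rfl⟩
      · have hxa : x ≠ a := fun hh => hax hh.symm
        have : 2 ≤ l.count x := by
          rwa [List.count_cons_of_ne hax] at h
        obtain ⟨u, v, t, rfl⟩ := ih this
        exact ⟨a :: u, v, t, rfl⟩

end ListLemmas

section Konig
open List

variable {n : ℕ}

/-- König-type lemma: if a prefix-closed property has words of every length,
there is an infinite word all of whose prefixes satisfy it. -/
lemma lemK (hn : 0 < n) (P : List (Fin n) → Prop)
    (hpref : ∀ s t : List (Fin n), s <+: t → P t → P s)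
    (hlong : ∀ L, ∃ s, P s ∧ s.length = L) :
    ∃ w : ℕ → Fin n, ∀ L, P (extract w 0 L) := by
  classical
  -- invariant: s has P-extensions of every length
  set I : List (Fin n) → Prop :=
    fun s => ∀ L, ∃ t, P t ∧ s <+: t ∧ s.length + L ≤ t.length with hI
  have hI0 : I [] := by
    intro L
    obtain ⟨s, hs, hlen⟩ := hlong L
    exact ⟨s, hs, List.nil_prefix, by simp [hlen]⟩
  have step : ∀ s, I s → ∃ c : Fin n, I (s ++ [c]) := by
    intro s hs
    by_contra hcon
    push_neg at hcon
    simp only [hI] at hcon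
    push_neg at hcon
    -- for each c, a length bound beyond which no extension exists
    choose! L hL using hcon
    -- hL : ∀ c t, P t → (s++[c]) <+: t → ¬ (s++[c]).length + L c ≤ t.length
    have hLbd : ∃ B, ∀ c : Fin n, L c ≤ B := by
      refine ⟨(Finset.univ : Finset (Fin n)).sup L, fun c => Finset.le_sup (by simp)⟩
    obtain ⟨B, hB⟩ := hLbd
    obtain ⟨t, hPt, hpre, hlen⟩ := hs (B + 1)
    obtain ⟨r, rfl⟩ := hpre
    have hr : r ≠ [] := by
      intro h; subst h
      simp only [List.append_nil] at hlen
      omega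
    obtain ⟨c, r', rfl⟩ := List.exists_cons_of_ne_nil hr
    have hpre2 : (s ++ [c]) <+: (s ++ c :: r') := by
      refine ⟨r', by simp⟩
    have hcontra := hL c _ hPt hpre2
    have hBc := hB c
    simp only [List.length_append, List.length_cons, List.length_nil] at hcontra hlen
    omega
  -- build the chain
  let g : ℕ → {s : List (Fin n) // I s} := fun k =>
    Nat.rec ⟨[], hI0⟩ (fun _ prev =>
      ⟨prev.1 ++ [Classical.choose (step prev.1 prev.2)],
        Classical.choose_spec (step prev.1 prev.2)⟩) k
  have hglen : ∀ k, (g k).1.length = k := by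
    intro k
    induction k with
    | zero => rfl
    | succ k ih => show ((g k).1 ++ _).length = k+1; simp [ih]
  have hgsucc : ∀ k, ∃ c, (g (k+1)).1 = (g k).1 ++ [c] := fun k =>
    ⟨_, rfl⟩
  have hd : 0 < n := hn
  let w : ℕ → Fin n := fun i => ((g (i+1)).1).getLastD ⟨0, hd⟩
  have hext : ∀ L, extract w 0 L = (g L).1 := by
    intro L
    induction L with
    | zero => simp; rfl
    | succ L ih =>
        obtain ⟨c, hc⟩ := hgsucc L
        have hwL : w L = c := by
          show ((g (L+1)).1).getLastD ⟨0, hd⟩ = c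
          rw [hc]; simp [List.getLastD_concat]
        rw [extract_succ, ih, Nat.zero_add, hwL, hc]
  refine ⟨w, fun L => ?_⟩
  rw [hext]
  obtain ⟨t, hPt, hpre, _⟩ := (g L).2 0
  exact hpref _ _ hpre hPt

end Konig

section Compact
open List
variable {α : Type*} {V : Type*}

lemma infix_extract {w : ℕ → α} {u' : List α} {i n : ℕ}
    (h : u' <:+: extract w i n) :
    ∃ j, i ≤ j ∧ j + u'.length ≤ i + n ∧ u' = extract w j u'.length := by
  obtain ⟨s, t, hst⟩ := h
  have h1 : (s ++ u') ++ t = extract w i n := by rw [← hst]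
  have hn : n = (s ++ u').length + t.length := by
    have := congrArg List.length h1
    simp only [List.length_append, extract_length] at this
    simp only [List.length_append]
    omega
  have h2 := (append_eq_extract_split (hn ▸ h1)).1
  have h3 := (append_eq_extract_split h2).2
  refine ⟨i + s.length, by omega, ?_, h3⟩
  have := congrArg List.length h1
  simp only [List.length_append, extract_length] at this
  omega

lemma extract_prefix_mono (w : ℕ → α) {M₁ M₂ : ℕ} (h : M₁ ≤ M₂) :
    extract w 0 M₁ <+: extract w 0 M₂ := by
  obtain ⟨d, rfl⟩ := Nat.exists_eq_add_of_le h
  rw [extract_add]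
  exact ⟨_, rfl⟩

lemma compact {u v : List V} {n : ℕ} (hn : 0 < n)
    (hna : ¬ Avoidable ({u, v} : Set (List V))) :
    ∃ K, ∀ c : List (Fin n), c.length = K →
      ∃ h : V → List (Fin n), NonErasing h ∧ patImage h u <:+: c ∧ patImage h v <:+: c := by
  classical
  by_contra hcon
  push_neg at hcon
  set P : List (Fin n) → Prop :=
    fun s => ¬ ∃ h : V → List (Fin n), NonErasing h ∧ patImage h u <:+: s ∧ patImage h v <:+: s
    with hP
  have hpref : ∀ s t : List (Fin n), s <+: t → P t → P s := by
    intro s t hst hPt ⟨h, hne, h1, h2⟩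
    exact hPt ⟨h, hne, h1.trans hst.isInfix, h2.trans hst.isInfix⟩
  have hlong : ∀ L, ∃ s, P s ∧ s.length = L := by
    intro L
    obtain ⟨c, hc1, hc2⟩ := hcon L
    refine ⟨c, ?_, hc1⟩
    rintro ⟨h, hne, h1, h2⟩
    exact (hc2 h hne h1) h2
  obtain ⟨w, hw⟩ := lemK hn P hpref hlong
  have := not_avoidable_iff.mp hna n w
  obtain ⟨h, hne, hfac⟩ := this
  obtain ⟨M₁, hM₁⟩ := isFactorOf_infix_prefix (hfac u (by simp))
  obtain ⟨M₂, hM₂⟩ := isFactorOf_infix_prefix (hfac v (by simp))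
  refine hw (max M₁ M₂) ⟨h, hne, ?_, ?_⟩
  · exact hM₁.trans (extract_prefix_mono w (le_max_left _ _)).isInfix
  · exact hM₂.trans (extract_prefix_mono w (le_max_right _ _)).isInfix

lemma stitch {u v : List V} {x : V} (hxu : x ∉ u) (hxv : x ∉ v)
    (hna : ¬ Avoidable ({u, v} : Set (List V))) :
    ¬ Avoidable ({u ++ x :: v} : Set (List V)) := by
  classical
  rintro ⟨n, w, hw⟩
  have hn : 0 < n := by
    rcases Nat.eq_zero_or_pos n with h | h
    · subst h; exact (w 0).elim0
    · exact h
  obtain ⟨K, hK⟩ := compact (u := u) (v := v) hn hna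
  set M := K + 1 with hM
  obtain ⟨a, b, hab, habeq⟩ :=
    Finite.exists_ne_map_eq_of_infinite (fun j : ℕ => (fun t : Fin K => w (j*M + t)))
  have key : ∃ j j' : ℕ, j < j' ∧ ∀ t : ℕ, t < K → w (j*M + t) = w (j'*M + t) := by
    rcases lt_or_gt_of_ne hab with hlt | hgt
    · exact ⟨a, b, hlt, fun t ht => congrFun habeq ⟨t, ht⟩⟩
    · exact ⟨b, a, hgt, fun t ht => (congrFun habeq ⟨t, ht⟩).symm⟩
  obtain ⟨j, j', hjj, heqw⟩ := key
  have hext : extract w (j*M) K = extract w (j'*M) K := by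
    unfold _root_.extract
    apply List.map_congr_left
    intro t ht
    exact heqw t (List.mem_range.mp ht)
  obtain ⟨h, hne, hu1, hv1⟩ := hK (extract w (j*M) K) (by simp)
  rw [hext] at hv1
  obtain ⟨π₁, hπ₁a, hπ₁b, hπ₁⟩ := infix_extract hu1
  obtain ⟨π₂, hπ₂a, hπ₂b, hπ₂⟩ := infix_extract hv1
  set A := (patImage h u).length with hA
  set B := (patImage h v).length with hB
  have hsep : π₁ + A + 1 ≤ π₂ := by
    have : j*M + M ≤ j'*M := by
      have : (j+1) * M ≤ j' * M := Nat.mul_le_mul_right M hjj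
      simpa [Nat.add_mul] using this
    omega
  set G := π₂ - (π₁ + A) with hG
  have hGpos : 0 < G := by omega
  set gap := extract w (π₁ + A) G with hgap
  set h' := Function.update h x gap with hh'
  have himgu : patImage h' u = patImage h u :=
    patImage_congr (fun y hy => Function.update_of_ne (fun hyx => hxu (by subst hyx; exact hy)) _ _)
  have himgv : patImage h' v = patImage h v :=
    patImage_congr (fun y hy => Function.update_of_ne (fun hyx => hxv (by subst hyx; exact hy)) _ _)
  have himg : patImage h' (u ++ x :: v) = patImage h u ++ gap ++ patImage h v := by
    rw [patImage_append, patImage_cons, himgu, himgv]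
    have : h' x = gap := Function.update_self x gap h
    rw [this, List.append_assoc]
  apply hw h'
  constructor
  · intro y
    rw [hh']
    by_cases hyx : y = x
    · subst hyx
      rw [Function.update_self]
      intro hnil
      have := congrArg List.length hnil
      rw [hgap] at hnil
      have h0 := congrArg List.length hnil
      simp only [extract_length, List.length_nil] at h0
      omega
    · rw [Function.update_of_ne hyx]
      exact hne y
  · intro q hq
    simp only [Set.mem_singleton_iff] at hq
    subst hq
    rw [himg]
    refine ⟨π₁, ?_⟩
    have hlen : (patImage h u ++ gap ++ patImage h v).length = A + (G + B) := by
      simp only [List.length_append, hgap, extract_length, ← hA, ← hB]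
      omega
    rw [hlen, extract_add, extract_add, ← hπ₁, ← hgap]
    have hπ₂' : π₂ = π₁ + A + G := by omega
    rw [← hπ₂', ← hπ₂]
    simp [List.append_assoc]

end Compact

section Counting
open List Finset

/-- Goodness of a finite word: every repetition `x...x` has a long gap. -/
def GoodL {k : ℕ} (R : ℕ) (l : List (Fin k)) : Prop :=
  ∀ x γ : List (Fin k), x ≠ [] → (x ++ γ ++ x) <:+: l → R * x.length < γ.length

lemma goodL_of_infix {k R : ℕ} {s l : List (Fin k)} (h : s <:+: l) (hl : GoodL R l) :
    GoodL R s := fun x γ hx hinf => hl x γ hx (hinf.trans h)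

lemma goodL_nil {k R : ℕ} : GoodL R ([] : List (Fin k)) := by
  intro x γ hx hinf
  rw [List.infix_nil] at hinf
  rcases List.append_eq_nil_iff.mp ((List.append_eq_nil_iff.mp hinf).1) with ⟨h1, -⟩
  exact absurd h1 hx

noncomputable def SGood (R k : ℕ) : ℕ → Finset (List (Fin k))
  | 0 => {[]}
  | (L+1) =>
      @Finset.filter _ (GoodL R) (Classical.decPred _)
        (((SGood R k L) ×ˢ (Finset.univ : Finset (Fin k))).image (fun q => q.1 ++ [q.2]))

lemma mem_SGood {R k : ℕ} : ∀ {L : ℕ} {l : List (Fin k)},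
    l ∈ SGood R k L ↔ (l.length = L ∧ GoodL R l) := by
  intro L
  induction L with
  | zero =>
      intro l
      simp only [SGood, Finset.mem_singleton]
      constructor
      · rintro rfl; exact ⟨rfl, goodL_nil⟩
      · rintro ⟨h1, -⟩; exact List.length_eq_zero_iff.mp h1
  | succ L ih =>
      intro l
      simp only [SGood, Finset.mem_filter, Finset.mem_image, Finset.mem_product]
      constructor
      · rintro ⟨⟨⟨u, c⟩, ⟨hu, -⟩, rfl⟩, hg⟩
        have := (ih.mp hu).1
        simp [this]
        exact hg
      · rintro ⟨hlen, hg⟩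
        have hne : l ≠ [] := by intro h; subst h; simp at hlen
        refine ⟨⟨⟨l.dropLast, l.getLast hne⟩, ⟨?_, Finset.mem_univ _⟩, ?_⟩, hg⟩
        · rw [ih]
          constructor
          · rw [List.length_dropLast, hlen]; rfl
          · exact goodL_of_infix (List.dropLast_prefix l).isInfix hg
        · exact List.dropLast_append_getLast hne

lemma pow_mul_le {ℓ : ℕ} (h : 1 ≤ ℓ) : ℓ * 2^(ℓ-1) ≤ 4^(ℓ-1) := by
  obtain ⟨m, rfl⟩ := Nat.exists_eq_add_of_le h
  have h1 : 1 + m - 1 = m := by omega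
  rw [h1]
  have h2 : 1 + m ≤ 2^m := by
    have := Nat.lt_two_pow_self (n := m); omega
  calc (1+m) * 2^m ≤ 2^m * 2^m := Nat.mul_le_mul_right _ h2
    _ = 4^m := by rw [← Nat.mul_pow]

lemma halving : ∀ (M : ℕ) (z : ℕ → ℕ) (x : ℕ),
    (∀ i, i < M → 2^i * z i ≤ x) → (Finset.range M).sum z ≤ 2 * x := by
  intro M
  induction M with
  | zero => intro z x _; simp
  | succ M ih =>
      intro z x hz
      rw [Finset.sum_range_succ']
      have h0 : z 0 ≤ x := by have := hz 0 (by omega); simpa using this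
      have hrest : (Finset.range M).sum (fun i => z (i+1)) ≤ 2 * (x / 2) := by
        apply ih
        intro i hi
        have h3 := hz (i+1) (by omega)
        have h4 : 2 * (2^i * z (i+1)) ≤ x := by
          calc 2 * (2^i * z (i+1)) = 2^(i+1) * z (i+1) := by ring
            _ ≤ x := h3
        omega
      have hdiv : 2 * (x / 2) ≤ x := by omega
      omega

end Counting

section Growth
open List Finset

lemma sum_Icc_one (M : ℕ) (f : ℕ → ℕ) :
    (Finset.Icc 1 M).sum f = (Finset.range M).sum (fun i => f (i+1)) := by
  induction M with
  | zero => simp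
  | succ M ih =>
      rw [Finset.sum_Icc_succ_top (by omega : 1 ≤ M+1), ih, Finset.sum_range_succ]

theorem SGood_growth (R : ℕ) (hR : 1 ≤ R) :
    ∀ L : ℕ, 2*(R+1) * (SGood R (4*(R+1)) L).card ≤ (SGood R (4*(R+1)) (L+1)).card := by
  classical
  set k := 4*(R+1) with hk
  intro L
  induction L using Nat.strong_induction_on with
  | _ L IH =>
  -- the chain of growth below L
  have chain : ∀ ℓ : ℕ, ℓ ≤ L → 4^ℓ * (SGood R k (L-ℓ)).card ≤ (SGood R k L).card := by
    intro ℓ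
    induction ℓ with
    | zero => intro _; simp
    | succ ℓ ihc =>
        intro hle
        have hle' : ℓ ≤ L := by omega
        have h1 : L - ℓ - 1 < L := by omega
        have h2 := IH (L - ℓ - 1) h1
        have h3 : L - ℓ - 1 + 1 = L - ℓ := by omega
        rw [h3] at h2
        have h5 : L - (ℓ+1) = L - ℓ - 1 := by omega
        rw [h5]
        have h6 : 4 * (SGood R k (L-ℓ-1)).card ≤ 2*(R+1) * (SGood R k (L-ℓ-1)).card :=
          Nat.mul_le_mul_right _ (by omega)
        have h7 : 4^(ℓ+1) * (SGood R k (L-ℓ-1)).card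
            = 4^ℓ * (4 * (SGood R k (L-ℓ-1)).card) := by ring
        rw [h7]
        calc 4^ℓ * (4 * (SGood R k (L-ℓ-1)).card)
            ≤ 4^ℓ * (SGood R k (L-ℓ)).card :=
              Nat.mul_le_mul_left _ (le_trans h6 h2)
          _ ≤ _ := ihc hle'
  set SL := SGood R k L with hSL
  set E : Finset (List (Fin k)) :=
    (SL ×ˢ (Finset.univ : Finset (Fin k))).image (fun q => q.1 ++ [q.2]) with hE
  have hmemE : ∀ l ∈ E, ∃ u c, u ∈ SL ∧ l = u ++ [c] := by
    intro l hl
    rw [hE, Finset.mem_image] at hl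
    obtain ⟨⟨u, c⟩, hq, rfl⟩ := hl
    exact ⟨u, c, (Finset.mem_product.mp hq).1, rfl⟩
  have hlenE : ∀ l ∈ E, l.length = L + 1 := by
    intro l hl
    obtain ⟨u, c, hu, rfl⟩ := hmemE l hl
    have := (mem_SGood.mp hu).1
    simp [this]
  have hEcard : E.card = SL.card * k := by
    rw [hE]
    rw [Finset.card_image_of_injOn]
    · rw [Finset.card_product, Finset.card_univ, Fintype.card_fin]
    · rintro ⟨u, c⟩ hq ⟨u', c'⟩ hq' heq
      simp only [Finset.mem_coe, Finset.mem_product] at hq hq'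
      have hlen : u.length = u'.length := by
        rw [(mem_SGood.mp hq.1).1, (mem_SGood.mp hq'.1).1]
      obtain ⟨h1, h2⟩ := List.append_inj heq hlen
      have h1' : u = u' := h1
      have hc : c = c' := by simpa using h2
      simp [h1', hc]
  have hSsucc : SGood R k (L+1) = @Finset.filter _ (GoodL R) (Classical.decPred _) E := rfl
  rw [hSsucc, Finset.filter_congr_decidable]
  have hsplitc : (E.filter (GoodL R)).card + (E.filter (fun l => ¬ GoodL R l)).card = E.card :=
    Finset.card_filter_add_card_filter_not (p := GoodL R)
  set bad := E.filter (fun l => ¬ GoodL R l) with hbad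
  -- killed classes
  set T : ℕ → ℕ → Finset (List (Fin k)) := fun ℓ g =>
    E.filter (fun l => ∃ s x γ : List (Fin k),
      x.length = ℓ ∧ γ.length = g ∧ x ≠ [] ∧ g ≤ R * ℓ ∧ l = s ++ x ++ γ ++ x) with hT
  have hcover : bad ⊆ (Finset.Icc 1 (L+1) ×ˢ Finset.range (R*(L+1)+1)).biUnion
      (fun q => T q.1 q.2) := by
    intro l hl
    rw [hbad, Finset.mem_filter] at hl
    obtain ⟨hlE, hlb⟩ := hl
    obtain ⟨u, c, huSL, rfl⟩ := hmemE l hlE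
    have hugood : GoodL R u := (mem_SGood.mp huSL).2
    have hulen : u.length = L := (mem_SGood.mp huSL).1
    unfold GoodL at hlb
    push_neg at hlb
    obtain ⟨x, γ, hx, hinf, hge⟩ := hlb
    obtain ⟨s, e, hse⟩ := hinf
    have he : e = [] := by
      by_contra hne
      obtain ⟨e', c₂, rfl⟩ := (List.eq_nil_or_concat e).resolve_left hne
      have hse' : (s ++ (x ++ γ ++ x) ++ e') ++ [c₂] = u ++ [c] := by
        rw [← hse]; simp [List.append_assoc]
      have := (List.append_inj' hse' rfl).1
      have hinfu : (x ++ γ ++ x) <:+: u := ⟨s, e', this⟩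
      exact absurd (hugood x γ hx hinfu) (by omega)
    subst he
    have hdecomp : u ++ [c] = s ++ x ++ γ ++ x := by
      rw [← hse]; simp [List.append_assoc]
    have hlentot : (u ++ [c]).length = L + 1 := by simp [hulen]
    have hlens : s.length + x.length + γ.length + x.length = L + 1 := by
      have h := congrArg List.length hdecomp
      simp only [List.length_append, List.length_singleton] at h
      omega
    have hxpos : 1 ≤ x.length := List.length_pos_iff.mpr hx
    rw [Finset.mem_biUnion]
    refine ⟨(x.length, γ.length), ?_, ?_⟩
    · rw [Finset.mem_product]
      constructor
      · rw [Finset.mem_Icc]; omega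
      · rw [Finset.mem_range]
        have : γ.length ≤ R * x.length := hge
        have hxle : x.length ≤ L + 1 := by omega
        have := Nat.mul_le_mul_left R hxle
        omega
    · rw [hT, Finset.mem_filter]
      exact ⟨hlE, s, x, γ, rfl, rfl, hx, hge, hdecomp⟩
  have hTcard : ∀ ℓ g, 1 ≤ ℓ → (T ℓ g).card ≤ (SGood R k (L+1-ℓ)).card := by
    intro ℓ g hℓ
    have hrecon : ∀ l ∈ T ℓ g,
        l = l.take (L+1-ℓ) ++ ((l.take (L+1-ℓ)).drop (L+1-ℓ-ℓ-g)).take ℓ := by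
      intro l hl
      rw [hT, Finset.mem_filter] at hl
      obtain ⟨hlE, s, x, γ, hxl, hγl, hx, -, hdec⟩ := hl
      have hllen : l.length = L + 1 := hlenE l hlE
      have hlens : s.length + x.length + γ.length + x.length = L + 1 := by
        have := congrArg List.length hdec
        simp only [List.length_append] at this
        omega
      have hsxγ : (s ++ x ++ γ).length = L + 1 - ℓ := by
        simp only [List.length_append]; omega
      have hP : l.take (L+1-ℓ) = s ++ x ++ γ := by
        rw [hdec]
        exact List.take_left' hsxγ
      rw [hP]
      have hss : L+1-ℓ-ℓ-g = s.length := by omega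
      rw [hss]
      have hdrop : (s ++ x ++ γ).drop s.length = x ++ γ := by
        have : s ++ x ++ γ = s ++ (x ++ γ) := by simp [List.append_assoc]
        rw [this]
        exact List.drop_left
      rw [hdrop]
      have htake : (x ++ γ).take ℓ = x := List.take_left' hxl
      rw [htake]
      exact hdec
    apply Finset.card_le_card_of_injOn (fun l => l.take (L+1-ℓ))
    · intro l hl
      have hlE : l ∈ E := by
        simp only [Finset.mem_coe, hT, Finset.mem_filter] at hl; exact hl.1
      obtain ⟨u, c, huSL, rfl⟩ := hmemE l hlE
      have hulen : u.length = L := (mem_SGood.mp huSL).1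
      have htk : (u ++ [c]).take (L+1-ℓ) = u.take (L+1-ℓ) := by
        apply List.take_append_of_le_length
        omega
      simp only [Finset.mem_coe]
      rw [htk, mem_SGood]
      constructor
      · rw [List.length_take]; omega
      · exact goodL_of_infix (List.take_prefix _ _).isInfix (mem_SGood.mp huSL).2
    · intro l₁ h₁ l₂ h₂ heq
      have e₁ := hrecon l₁ (Finset.mem_coe.mp h₁)
      have e₂ := hrecon l₂ (Finset.mem_coe.mp h₂)
      have heq' : l₁.take (L+1-ℓ) = l₂.take (L+1-ℓ) := by simpa using heq
      calc l₁ = l₁.take (L+1-ℓ) ++ ((l₁.take (L+1-ℓ)).drop (L+1-ℓ-ℓ-g)).take ℓ := e₁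
        _ = l₂.take (L+1-ℓ) ++ ((l₂.take (L+1-ℓ)).drop (L+1-ℓ-ℓ-g)).take ℓ := by rw [heq']
        _ = l₂ := e₂.symm
  have hTempty : ∀ ℓ g, R*ℓ < g → (T ℓ g).card = 0 := by
    intro ℓ g hg
    rw [Finset.card_eq_zero, hT]
    rw [Finset.filter_eq_empty_iff]
    rintro l - ⟨s, x, γ, hxl, hγl, -, hle, -⟩
    omega
  -- bound bad
  have hbadle : bad.card ≤ 2 * ((R+1) * SL.card) := by
    have h1 : bad.card ≤ ((Finset.Icc 1 (L+1) ×ˢ Finset.range (R*(L+1)+1)).biUnion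
        (fun q => T q.1 q.2)).card := Finset.card_le_card hcover
    have h2 := Finset.card_biUnion_le
      (s := Finset.Icc 1 (L+1) ×ˢ Finset.range (R*(L+1)+1)) (t := fun q => T q.1 q.2)
    have h3 : ((Finset.Icc 1 (L+1) ×ˢ Finset.range (R*(L+1)+1)).sum
        (fun q => (T q.1 q.2).card))
        = (Finset.Icc 1 (L+1)).sum (fun ℓ => (Finset.range (R*(L+1)+1)).sum
            (fun g => (T ℓ g).card)) := by
      rw [Finset.sum_product]
    have h4 : ∀ ℓ ∈ Finset.Icc 1 (L+1),
        (Finset.range (R*(L+1)+1)).sum (fun g => (T ℓ g).card)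
          ≤ (R*ℓ+1) * (SGood R k (L+1-ℓ)).card := by
      intro ℓ hℓ
      rw [Finset.mem_Icc] at hℓ
      have hsub : Finset.range (R*ℓ+1) ⊆ Finset.range (R*(L+1)+1) := by
        apply Finset.range_subset_range.mpr
        have := Nat.mul_le_mul_left R hℓ.2
        omega
      have heqsum : (Finset.range (R*(L+1)+1)).sum (fun g => (T ℓ g).card)
          = (Finset.range (R*ℓ+1)).sum (fun g => (T ℓ g).card) := by
        refine (Finset.sum_subset hsub ?_).symm
        intro g hgbig hg
        rw [Finset.mem_range] at hg
        exact hTempty ℓ g (by omega)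
      have hsum2 : (Finset.range (R*ℓ+1)).sum (fun g => (T ℓ g).card)
          ≤ (Finset.range (R*ℓ+1)).card * (SGood R k (L+1-ℓ)).card := by
        have := Finset.sum_le_card_nsmul (Finset.range (R*ℓ+1))
          (fun g => (T ℓ g).card) ((SGood R k (L+1-ℓ)).card)
          (fun g _ => hTcard ℓ g hℓ.1)
        simpa [smul_eq_mul] using this
      rw [heqsum, Finset.card_range] at *
      exact hsum2
    have zbound : ∀ ℓ : ℕ, 1 ≤ ℓ → ℓ ≤ L+1 →
        2^(ℓ-1) * ((R*ℓ+1) * (SGood R k (L+1-ℓ)).card) ≤ (R+1) * SL.card := by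
      intro ℓ hℓ1 hℓL
      have hz1 : R*ℓ+1 ≤ (R+1)*ℓ := by
        have h' : R*ℓ + 1 ≤ R*ℓ + ℓ := by omega
        calc R*ℓ+1 ≤ R*ℓ+ℓ := h'
          _ = (R+1)*ℓ := by ring
      have hchain := chain (ℓ-1) (by omega)
      have hLeq : L - (ℓ-1) = L+1-ℓ := by omega
      rw [hLeq] at hchain
      have hpw : ℓ * 2^(ℓ-1) ≤ 4^(ℓ-1) := pow_mul_le hℓ1
      calc 2^(ℓ-1) * ((R*ℓ+1) * (SGood R k (L+1-ℓ)).card)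
          ≤ 2^(ℓ-1) * (((R+1)*ℓ) * (SGood R k (L+1-ℓ)).card) :=
            Nat.mul_le_mul_left _ (Nat.mul_le_mul_right _ hz1)
        _ = (R+1) * ((ℓ * 2^(ℓ-1)) * (SGood R k (L+1-ℓ)).card) := by ring
        _ ≤ (R+1) * (4^(ℓ-1) * (SGood R k (L+1-ℓ)).card) :=
            Nat.mul_le_mul_left _ (Nat.mul_le_mul_right _ hpw)
        _ ≤ (R+1) * SL.card := Nat.mul_le_mul_left _ hchain
    have h5 : (Finset.Icc 1 (L+1)).sum (fun ℓ => (R*ℓ+1) * (SGood R k (L+1-ℓ)).card)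
        ≤ 2 * ((R+1) * SL.card) := by
      rw [sum_Icc_one]
      apply halving
      intro i hi
      have := zbound (i+1) (by omega) (by omega)
      simpa using this
    calc bad.card ≤ _ := h1
      _ ≤ _ := h2
      _ = _ := h3
      _ ≤ (Finset.Icc 1 (L+1)).sum (fun ℓ => (R*ℓ+1) * (SGood R k (L+1-ℓ)).card) :=
          Finset.sum_le_sum h4
      _ ≤ 2 * ((R+1) * SL.card) := h5
  -- conclude
  have e1 : SL.card * k = 4*((R+1)*SL.card) := by
    have hkk : k = 4*(R+1) := hk
    generalize SL.card = a
    rw [hkk]; ring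
  have e2 : 2*(R+1)*SL.card = 2*((R+1)*SL.card) := by ring
  rw [e2]
  rw [e1] at hEcard
  omega

section GoodWord
open List

/-- A `R`-good infinite word: every repetition has a gap longer than `R` times the period. -/
def GoodW (R : ℕ) {k : ℕ} (W : ℕ → Fin k) : Prop :=
  ∀ x γ : List (Fin k), x ≠ [] → IsFactorOf (x ++ γ ++ x) W → R * x.length < γ.length

lemma exists_good_word (R : ℕ) (hR : 1 ≤ R) :
    ∃ (n : ℕ), 0 < n ∧ ∃ W : ℕ → Fin n, GoodW R W := by
  classical
  have hkpos : 0 < 4*(R+1) := by omega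
  have hcard : ∀ L, 1 ≤ (SGood R (4*(R+1)) L).card := by
    intro L
    induction L with
    | zero => simp [SGood]
    | succ L ih =>
        have hg := SGood_growth R hR L
        have h2 : 1 ≤ 2*(R+1) := by omega
        calc (1:ℕ) = 1*1 := by ring
          _ ≤ 2*(R+1) * (SGood R (4*(R+1)) L).card := Nat.mul_le_mul h2 ih
          _ ≤ _ := hg
  have hlong : ∀ L, ∃ l : List (Fin (4*(R+1))), GoodL R l ∧ l.length = L := by
    intro L
    have hpos : 0 < (SGood R (4*(R+1)) L).card := by have := hcard L; omega
    obtain ⟨l, hl⟩ := Finset.card_pos.mp hpos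
    have := mem_SGood.mp hl
    exact ⟨l, this.2, this.1⟩
  obtain ⟨W, hW⟩ := lemK hkpos (GoodL R)
    (fun s t hst ht => goodL_of_infix hst.isInfix ht) hlong
  refine ⟨4*(R+1), hkpos, W, ?_⟩
  intro x γ hx hfac
  obtain ⟨M, hM⟩ := isFactorOf_infix_prefix hfac
  exact hW M x γ hx hM

variable {V : Type*} {k R : ℕ} {W : ℕ → Fin k}

lemma key_var [DecidableEq V] {h : V → List (Fin k)} (hgw : GoodW R W)
    (hne : NonErasing h) {r : List V} {v : V}
    (hfac : IsFactorOf (patImage h r) W) (hcnt : 2 ≤ r.count v) :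
    R * (h v).length + 1 ≤ (patImage h r).length := by
  obtain ⟨s₁, s₂, s₃, rfl⟩ := exists_two_split hcnt
  have hinf : (h v ++ patImage h s₂ ++ h v) <:+: patImage h (s₁ ++ v :: s₂ ++ v :: s₃) := by
    refine ⟨patImage h s₁, patImage h s₃, ?_⟩
    simp [patImage_append, patImage_cons, List.append_assoc]
  have hgap := hgw (h v) (patImage h s₂) (hne v) (isFactorOf_of_infix hinf hfac)
  have hlen := hinf.length_le
  simp only [List.length_append] at hlen
  omega

lemma key_sum [DecidableEq V] {h : V → List (Fin k)} {e : List V} {m : ℕ}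
    (he : ∀ u ∈ e, R * (h u).length + 1 ≤ m) :
    R * (patImage h e).length + e.length ≤ e.length * m := by
  induction e with
  | nil => simp
  | cons u e ih =>
      have h1 := he u (by simp)
      have h2 : R * (patImage h e).length + e.length ≤ e.length * m :=
        ih (fun u' hu' => he u' (by simp [hu']))
      simp only [patImage_cons, List.length_append, List.length_cons]
      have h3 : R * ((h u).length + (patImage h e).length)
          = R*(h u).length + R*(patImage h e).length := by ring
      have h4 : (e.length + 1) * m = e.length * m + m := by ring
      omega

/-- A good word admits no occurrence of a pattern all of whose variables are doubled. -/
lemma kill_doubled [DecidableEq V] (hgw : GoodW R W) {h : V → List (Fin k)}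
    (hne : NonErasing h) {r : List V} (hr : r ≠ [])
    (hdbl : ∀ v ∈ r, 2 ≤ r.count v) (hlen : r.length + 1 ≤ R)
    (hfac : IsFactorOf (patImage h r) W) : False := by
  set m := (patImage h r).length with hm
  have hmpos : 0 < m := length_patImage_pos hne hr
  have he : ∀ u ∈ r, R * (h u).length + 1 ≤ m :=
    fun u hu => key_var hgw hne hfac (hdbl u hu)
  have hsum := key_sum he
  rw [← hm] at hsum
  -- R * (img r).length ≥ r.length * ? : need m=|img r| ≥ ... use: m ≤ sum of |h v| * ... trivial: |img r| : relate
  -- we need R*m ≤ ... : m = |patImage h r| and sum over letters: R*m + |r| ≤ |r|*m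
  -- but key_sum gives R * (patImage h r).length i.e. R*m: yes e := r
  -- hsum : R * m + r.length ≤ r.length * m
  have h5 : r.length * m ≤ (R - 1) * m := Nat.mul_le_mul_right m (by omega)
  have h6 : (R - 1) * m + m = R * m := by
    have : R - 1 + 1 = R := by omega
    calc (R-1)*m + m = (R-1+1)*m := by ring
      _ = R * m := by rw [this]
  omega

end GoodWord

section Helpers
open List
variable {α : Type*}

lemma prefix_dropLast {l s : List α} (h : s <+: l) (hlen : s.length + 1 ≤ l.length) :
    s <+: l.dropLast := by
  rw [List.dropLast_eq_take, List.prefix_take_iff]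
  exact ⟨h, by omega⟩

lemma suffix_tail {l s : List α} (h : s <:+ l) (hlen : s.length + 1 ≤ l.length) :
    s <:+ l.tail := by
  obtain ⟨pre, rfl⟩ := h
  have hpre : pre ≠ [] := by
    intro h0; subst h0
    simp only [List.nil_append] at hlen
    omega
  obtain ⟨c, pre', rfl⟩ := List.exists_cons_of_ne_nil hpre
  rw [List.cons_append, List.tail_cons]
  exact ⟨pre', rfl⟩

end Helpers

section Main
open List

theorem stmt9' {V : Type*} (p : List V) (hp : p ≠ [])
    (hav : Avoidable ({p} : Set (List V)))
    (hsplit : ¬ Avoidable ({p.dropLast, p.tail} : Set (List V))) :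
    ∃ x : V, p = [x, x] := by
  classical
  by_cases h3 : 3 ≤ p.length
  · -- main case: derive a contradiction
    exfalso
    -- Step 1 : every variable of p occurs at least twice
    have hdbl : ∀ v ∈ p, 2 ≤ p.count v := by
      intro v hv
      by_contra hnot
      have h1 : p.count v = 1 := by
        have := List.count_pos_iff.mpr hv
        omega
      obtain ⟨u, vv, hdecomp, hxu, hxv⟩ := exists_split_of_count_one h1
      have hlens : u.length + 1 + vv.length = p.length := by
        have := congrArg List.length hdecomp
        simp only [List.length_append, List.length_cons] at this
        omega
      have hdiv : ∀ q ∈ ({u, vv} : Set (List V)),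
          ∃ r ∈ ({p.dropLast, p.tail} : Set (List V)), q <:+: r := by
        intro q hq
        simp only [Set.mem_insert_iff, Set.mem_singleton_iff] at hq
        rcases hq with rfl | rfl
        · refine ⟨p.dropLast, Set.mem_insert _ _, ?_⟩
          have hpre : q <+: p := ⟨v :: vv, hdecomp.symm⟩
          exact (prefix_dropLast hpre (by omega)).isInfix
        · refine ⟨p.tail, Set.mem_insert_of_mem _ rfl, ?_⟩
          have hsuf : q <:+ p := ⟨u ++ [v], by rw [hdecomp]; simp⟩
          exact (suffix_tail hsuf (by omega)).isInfix
      have huv := unavoidable_mono hsplit hdiv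
      have hnot2 := stitch hxu hxv huv
      rw [hdecomp] at hav
      exact hnot2 hav
    -- Step 2 : names
    set b := p.getLast hp with hbdef
    set d := p.dropLast with hddef
    have hdb : d ++ [b] = p := List.dropLast_append_getLast hp
    set a := p.head hp with hadef
    set t := p.tail with htdef
    have hat : a :: t = p := List.cons_head_tail hp
    have hdlen : d.length + 1 = p.length := by
      rw [hddef, List.length_dropLast]; omega
    have htlen : t.length + 1 = p.length := by
      rw [htdef, List.length_tail]; omega
    have hdne : d ≠ [] := by
      intro h0; rw [h0] at hdlen; simp at hdlen; omega
    have htne : t ≠ [] := by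
      intro h0; rw [h0] at htlen; simp at htlen; omega
    have hcount_d : ∀ v, p.count v = d.count v + if b = v then 1 else 0 := by
      intro v
      rw [← hdb, List.count_append]
      congr 1
      simp [List.count_cons]
    have hcount_t : ∀ v, p.count v = t.count v + if a = v then 1 else 0 := by
      intro v
      by_cases hva : a = v
      · subst hva; rw [← hat, List.count_cons_self, if_pos rfl]
      · rw [← hat, List.count_cons_of_ne hva, if_neg hva]
        omega
    have hmem_d : ∀ v ∈ d, v ∈ p := by
      intro v hv; rw [← hdb]; exact List.mem_append_left _ hv
    have hmem_t : ∀ v ∈ t, v ∈ p := by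
      intro v hv; rw [← hat]; exact List.mem_cons_of_mem _ hv
    -- Step 3 : a good word
    set R := p.length + 5 with hRdef
    obtain ⟨k, hkpos, W, hgw⟩ := exists_good_word R (by omega)
    -- Step 4 : W avoids the split formula
    apply hsplit
    refine ⟨k, W, ?_⟩
    intro h hocc
    obtain ⟨hne, hfacs⟩ := hocc
    have hfd : IsFactorOf (patImage h d) W := hfacs d (Set.mem_insert _ _)
    have hft : IsFactorOf (patImage h t) W := hfacs t (Set.mem_insert_of_mem _ rfl)
    by_cases hA : ∀ v ∈ d, 2 ≤ d.count v
    · exact kill_doubled hgw hne hdne hA (by omega) hfd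
    by_cases hB : ∀ v ∈ t, 2 ≤ t.count v
    · exact kill_doubled hgw hne htne hB (by omega) hft
    -- case C
    push_neg at hA hB
    obtain ⟨v₁, hv₁d, hv₁c⟩ := hA
    obtain ⟨v₂, hv₂t, hv₂c⟩ := hB
    have hv₁1 : d.count v₁ = 1 := by
      have := List.count_pos_iff.mpr hv₁d; omega
    have hv₂1 : t.count v₂ = 1 := by
      have := List.count_pos_iff.mpr hv₂t; omega
    have hbv : b = v₁ ∧ p.count v₁ = 2 := by
      have hite := hcount_d v₁
      have h2x := hdbl v₁ (hmem_d v₁ hv₁d)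
      by_cases hb : b = v₁
      · rw [if_pos hb] at hite; exact ⟨hb, by omega⟩
      · rw [if_neg hb] at hite; omega
    have hav' : a = v₂ ∧ p.count v₂ = 2 := by
      have hite := hcount_t v₂
      have h2x := hdbl v₂ (hmem_t v₂ hv₂t)
      by_cases ha : a = v₂
      · rw [if_pos ha] at hite; exact ⟨ha, by omega⟩
      · rw [if_neg ha] at hite; omega
    obtain ⟨hbv₁, hpcntb⟩ := hbv
    obtain ⟨hav₂, hpcnta⟩ := hav'
    subst hbv₁
    subst hav₂
    -- now : d.count b = 1, p.count b = 2, t.count a = 1, p.count a = 2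
    by_cases hab : a = b
    · -- p = a q a : the interior q is doubled
      obtain ⟨c, q, hdq⟩ := List.exists_cons_of_ne_nil hdne
      have hct : c :: (q ++ [b]) = a :: t := by
        calc c :: (q ++ [b]) = (c :: q) ++ [b] := by simp
          _ = d ++ [b] := by rw [hdq]
          _ = p := hdb
          _ = a :: t := hat.symm
      obtain ⟨hca, hqt⟩ := List.cons_eq_cons.mp hct
      have hqlen : q.length + 1 = t.length := by
        have := congrArg List.length hqt
        simp only [List.length_append, List.length_cons, List.length_nil] at this
        omega
      have hqne : q ≠ [] := by
        intro h0; rw [h0] at hqlen; simp at hqlen; omega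
      have hcount_q : ∀ v, t.count v = q.count v + if b = v then 1 else 0 := by
        intro v
        rw [← hqt, List.count_append]
        congr 1
        simp [List.count_cons]
      have htb : t.count b = 1 := by
        have h1 := hcount_t b
        rw [if_pos hab] at h1
        omega
      have hqb : q.count b = 0 := by
        have := hcount_q b
        rw [if_pos rfl] at this
        omega
      have hqdbl : ∀ v ∈ q, 2 ≤ q.count v := by
        intro v hv
        have hvb : ¬ (b = v) := by
          intro h0; subst h0
          exact absurd (List.count_pos_iff.mpr hv) (by omega)
        have hva : ¬ (a = v) := fun h0 => hvb (hab ▸ h0)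
        have h1 := hcount_q v
        rw [if_neg hvb] at h1
        have h2 := hcount_t v
        rw [if_neg hva] at h2
        have h3 := hdbl v (hmem_t v (by rw [← hqt]; exact List.mem_append_left _ hv))
        omega
      have hqinf : q <:+: t := by
        rw [← hqt]; exact (List.prefix_append _ _).isInfix
      have hfq : IsFactorOf (patImage h q) W :=
        isFactorOf_of_infix (patImage_isInfix h hqinf) hft
      exact kill_doubled hgw hne hqne hqdbl (by omega) hfq
    · -- a ≠ b : the two-sided length estimate
      have hcbt : 2 ≤ t.count b := by
        have := hcount_t b
        rw [if_neg hab] at this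
        omega
      have hcad : 2 ≤ d.count a := by
        have := hcount_d a
        rw [if_neg (fun h0 => hab h0.symm)] at this
        omega
      obtain ⟨e₁, e₂, hd_dec, hbne₁, hbne₂⟩ := exists_split_of_count_one hv₁1
      obtain ⟨f₁, f₂, ht_dec, hanf₁, hanf₂⟩ := exists_split_of_count_one hv₂1
      set md := (patImage h d).length with hmd
      set mt := (patImage h t).length with hmt
      have hmdpos : 0 < md := length_patImage_pos hne hdne
      have hmtpos : 0 < mt := length_patImage_pos hne htne
      have hbbound : R * (h b).length + 1 ≤ mt := key_var hgw hne hft hcbt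
      have habound : R * (h a).length + 1 ≤ md := key_var hgw hne hfd hcad
      -- d side
      have hdside : 7 * md < mt := by
        have hEd : ∀ v ∈ e₁ ++ e₂, R * (h v).length + 1 ≤ md := by
          intro v hv
          have hvd : v ∈ d := by
            rw [hd_dec]
            rcases List.mem_append.mp hv with h' | h'
            · exact List.mem_append_left _ h'
            · exact List.mem_append_right _ (List.mem_cons_of_mem _ h')
          have hvb : ¬ (b = v) := by
            intro h0; subst h0
            rcases List.mem_append.mp hv with h' | h'
            exacts [hbne₁ h', hbne₂ h']
          have h1 := hcount_d v
          rw [if_neg hvb] at h1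
          have h2 := hdbl v (hmem_d v hvd)
          exact key_var hgw hne hfd (by omega)
        have hS1 : R * (patImage h e₁).length + e₁.length ≤ e₁.length * md :=
          key_sum (fun u hu => hEd u (List.mem_append_left _ hu))
        have hS2 : R * (patImage h e₂).length + e₂.length ≤ e₂.length * md :=
          key_sum (fun u hu => hEd u (List.mem_append_right _ hu))
        have hmddec : md = (patImage h e₁).length + (h b).length + (patImage h e₂).length := by
          rw [hmd, hd_dec, patImage_append, patImage_cons]
          simp [List.length_append]
          omega
        have hElen : e₁.length + e₂.length + 2 = p.length := by
          have := congrArg List.length hd_dec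
          simp only [List.length_append, List.length_cons] at this
          omega
        have hR7 : R = e₁.length + e₂.length + 7 := by omega
        have hmul : R * md = R * (patImage h e₁).length + R * (h b).length
            + R * (patImage h e₂).length := by
          rw [hmddec]; ring
        have hconv : R * md = e₁.length * md + e₂.length * md + 7 * md := by
          rw [hR7]; ring
        omega
      -- t side
      have htside : 7 * mt < md := by
        have hEt : ∀ v ∈ f₁ ++ f₂, R * (h v).length + 1 ≤ mt := by
          intro v hv
          have hvt : v ∈ t := by
            rw [ht_dec]
            rcases List.mem_append.mp hv with h' | h'
            · exact List.mem_append_left _ h'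
            · exact List.mem_append_right _ (List.mem_cons_of_mem _ h')
          have hva : ¬ (a = v) := by
            intro h0; subst h0
            rcases List.mem_append.mp hv with h' | h'
            exacts [hanf₁ h', hanf₂ h']
          have h1 := hcount_t v
          rw [if_neg hva] at h1
          have h2 := hdbl v (hmem_t v hvt)
          exact key_var hgw hne hft (by omega)
        have hS1 : R * (patImage h f₁).length + f₁.length ≤ f₁.length * mt :=
          key_sum (fun u hu => hEt u (List.mem_append_left _ hu))
        have hS2 : R * (patImage h f₂).length + f₂.length ≤ f₂.length * mt :=
          key_sum (fun u hu => hEt u (List.mem_append_right _ hu))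
        have hmtdec : mt = (patImage h f₁).length + (h a).length + (patImage h f₂).length := by
          rw [hmt, ht_dec, patImage_append, patImage_cons]
          simp [List.length_append]
          omega
        have hFlen : f₁.length + f₂.length + 2 = p.length := by
          have := congrArg List.length ht_dec
          simp only [List.length_append, List.length_cons] at this
          omega
        have hR7 : R = f₁.length + f₂.length + 7 := by omega
        have hmul : R * mt = R * (patImage h f₁).length + R * (h a).length
            + R * (patImage h f₂).length := by
          rw [hmtdec]; ring
        have hconv : R * mt = f₁.length * mt + f₂.length * mt + 7 * mt := by
          rw [hR7]; ring
        omega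
      omega
  · -- short cases
    obtain ⟨n0, w0, hw0⟩ := hav
    have hn0 : 0 < n0 := by
      rcases Nat.eq_zero_or_pos n0 with h0 | h0
      · subst h0; exact (w0 0).elim0
      · exact h0
    rcases p with _ | ⟨x, _ | ⟨y, _ | ⟨z, rest⟩⟩⟩
    · exact absurd rfl hp
    · -- [x]
      exfalso
      apply hw0 (fun _ => [w0 0])
      refine ⟨fun v => by simp, ?_⟩
      intro q hq
      simp only [Set.mem_singleton_iff] at hq
      subst hq
      refine ⟨0, ?_⟩
      simp [patImage, _root_.extract, List.range_succ]
    · -- [x, y]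
      by_cases hxy : x = y
      · subst hxy; exact ⟨x, rfl⟩
      · exfalso
        apply hw0 (fun v => if v = x then [w0 0] else [w0 1])
        constructor
        · intro v; by_cases hv : v = x <;> simp [hv]
        · intro q hq
          simp only [Set.mem_singleton_iff] at hq
          subst hq
          refine ⟨0, ?_⟩
          have hyx : y ≠ x := fun h0 => hxy h0.symm
          have himg : patImage (fun v => if v = x then [w0 0] else [w0 1]) [x, y]
              = [w0 0, w0 1] := by
            simp [patImage, hyx]
          rw [himg]
          simp [_root_.extract, List.range_succ]
    · -- length ≥ 3, contradiction with h3
      exfalso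
      simp only [List.length_cons] at h3
      omega

end Main

/-- the only minimally avoidable formula with exactly one fragment is AA:
if the one-fragment formula `{p}` is avoidable and splitting it (replacing `p` by its
prefix and suffix of length |p|-1) gives an unavoidable formula, then `p = AA`. -/
theorem stmt9 {V : Type*} (p : List V) (hp : p ≠ [])
    (hav : Avoidable ({p} : Set (List V)))
    (hsplit : ¬ Avoidable ({p.dropLast, p.tail} : Set (List V))) :
    ∃ x : V, p = [x, x] := by
  exact stmt9' p hp hav hsplit
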